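/- arXiv:2302.13977 — 7 statements merged into one kernel-verified Lean document; each statement's English description precedes it below -/
import Mathlib

section
/- Let c_p > c_v > 0 be real constants, ι a finite index set, and ω, ρ0 : ι → ℝ with ω_i > 0 and ρ0_i > 0 for all i. For each i ∈ ι let θ_i, J_i : ℝ → ℝ be differentiable with θ_i(t) > 0, J_i(t) > 0 and J_i'(t) = J_i(t)·D_i(t) for all t, and let W_i : ℝ → ℝ satisfy W_i(t) ≥ 0 for all t. Suppose the semi-discrete internal energy equations hold: c_v·ρ0_i·θ_i'(t) = −(c_p − c_v)·ρ0_i·D_i(t)·θ_i(t) + W_i(t) for all i and t. Define s_i(t) = c_v·log(θ_i(t)) − (c_p − c_v)·log(ρ0_i / J_i(t)) + c_v and the total entropy S(t) = Σ_{i∈ι} ω_i·ρ0_i·s_i(t). Then S is differentiable with S'(t) = Σ_{i∈ι} ω_i·W_i(t)/θ_i(t) ≥ 0 for all t; in particular the total discrete entropy is nondecreasing. -/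
/-- semi-discrete entropy stability: the total discrete entropy
`S(t) = Σᵢ ωᵢ ρ0ᵢ sᵢ(t)` satisfies `S'(t) = Σᵢ ωᵢ Wᵢ(t)/θᵢ(t) ≥ 0`. -/
theorem semidiscrete_entropy_stability
    (cp cv : ℝ) (hcv : 0 < cv) (hcpv : cv < cp)
    (ι : Type*) [Fintype ι]
    (ω ρ0 : ι → ℝ) (hω : ∀ i, 0 < ω i) (hρ0 : ∀ i, 0 < ρ0 i)
    (θ J D W : ι → ℝ → ℝ)
    (hθdiff : ∀ i, Differentiable ℝ (θ i)) (hJdiff : ∀ i, Differentiable ℝ (J i))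
    (hθpos : ∀ i t, 0 < θ i t) (hJpos : ∀ i t, 0 < J i t)
    (hJD : ∀ i t, deriv (J i) t = J i t * D i t)
    (hW : ∀ i t, 0 ≤ W i t)
    (hinternal : ∀ i t, cv * ρ0 i * deriv (θ i) t
        = -(cp - cv) * ρ0 i * D i t * θ i t + W i t)
    (s : ι → ℝ → ℝ)
    (hs : ∀ i t, s i t = cv * Real.log (θ i t)
        - (cp - cv) * Real.log (ρ0 i / J i t) + cv)
    (S : ℝ → ℝ)
    (hS : ∀ t, S t = ∑ i, ω i * ρ0 i * s i t) :
    ∀ t, HasDerivAt S (∑ i, ω i * W i t / θ i t) t ∧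
      0 ≤ ∑ i, ω i * W i t / θ i t := by
  intro t
  have hterm : ∀ i : ι,
      HasDerivAt (fun u => ω i * ρ0 i * s i u) (ω i * W i t / θ i t) t := by
    intro i
    have hθne : θ i t ≠ 0 := (hθpos i t).ne'
    have hJne : J i t ≠ 0 := (hJpos i t).ne'
    have hsfun : s i = fun u => cv * Real.log (θ i u)
        - (cp - cv) * (Real.log (ρ0 i) - Real.log (J i u)) + cv := by
      funext u
      rw [hs, Real.log_div (hρ0 i).ne' (hJpos i u).ne']
    have h1 : HasDerivAt (fun u => Real.log (θ i u)) (deriv (θ i) t / θ i t) t :=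
      ((hθdiff i t).hasDerivAt).log hθne
    have h2 : HasDerivAt (fun u => Real.log (J i u)) (deriv (J i) t / J i t) t :=
      ((hJdiff i t).hasDerivAt).log hJne
    have hd : HasDerivAt (s i)
        (cv * (deriv (θ i) t / θ i t) - (cp - cv) * (0 - deriv (J i) t / J i t)) t := by
      rw [hsfun]
      exact (((h1.const_mul cv).sub
        (((hasDerivAt_const t (Real.log (ρ0 i))).sub h2).const_mul (cp - cv))).add_const cv)
    have hd2 := hd.const_mul (ω i * ρ0 i)
    refine hd2.congr_deriv ?_
    have hint := hinternal i t
    have hJ' := hJD i t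
    field_simp [hJ']
    linear_combination (ω i * J i t) * hint + (ω i * ρ0 i * θ i t * (cp - cv)) * hJ'
  have hsum : 0 ≤ ∑ i, ω i * W i t / θ i t :=
    Finset.sum_nonneg fun i _ =>
      div_nonneg (mul_nonneg (hω i).le (hW i t)) (hθpos i t).le
  refine ⟨?_, hsum⟩
  have hSfun : S = fun u => ∑ i, ω i * ρ0 i * s i u := funext hS
  rw [hSfun]
  exact HasDerivAt.fun_sum fun i _ => hterm i
end

section
/- Let c_p > c_v > 0 be real constants, ι a finite index set, and ω, ρ0 : ι → ℝ with ω_i > 0 and ρ0_i > 0 for all i. For each i ∈ ι let u_i : ℝ → ℝ^d and θ_i : ℝ → ℝ be differentiable, and let D_i, W_i : ℝ → ℝ. Assume: (i) the momentum equation tested with the velocity: Σ_{i∈ι} ω_i·ρ0_i·⟨u_i'(t), u_i(t)⟩ = (c_p − c_v)·Σ_{i∈ι} ω_i·ρ0_i·θ_i(t)·D_i(t) − Σ_{i∈ι} ω_i·W_i(t) for all t; and (ii) the pointwise internal energy equations: c_v·ρ0_i·θ_i'(t) = −(c_p − c_v)·ρ0_i·D_i(t)·θ_i(t) + W_i(t)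 for all i and t. Then the total discrete energy E(t) = Σ_{i∈ι} ω_i·ρ0_i·(½·‖u_i(t)‖² + c_v·θ_i(t)) has zero derivative for all t, hence is constant in time. -/
/-- semi-discrete total energy conservation: if the momentum
equation tested with the velocity and the pointwise internal energy equations
hold, then the total discrete energy
`E(t) = Σᵢ ωᵢ ρ0ᵢ (½‖uᵢ‖² + c_v θᵢ)` has zero derivative, hence is constant. -/
theorem semidiscrete_energy_conservation
    (cp cv : ℝ) (hcv : 0 < cv) (hcpv : cv < cp)
    (ι : Type*) [Fintype ι] (d : ℕ)
    (ω ρ0 : ι → ℝ) (hω : ∀ i, 0 < ω i) (hρ0 : ∀ i, 0 < ρ0 i)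
    (u : ι → ℝ → EuclideanSpace ℝ (Fin d)) (θ : ι → ℝ → ℝ)
    (hudiff : ∀ i, Differentiable ℝ (u i)) (hθdiff : ∀ i, Differentiable ℝ (θ i))
    (D W : ι → ℝ → ℝ)
    (hmom : ∀ t, ∑ i, ω i * ρ0 i * (inner ℝ (deriv (u i) t) (u i t) : ℝ)
        = (cp - cv) * ∑ i, ω i * ρ0 i * θ i t * D i t - ∑ i, ω i * W i t)
    (hinternal : ∀ i t, cv * ρ0 i * deriv (θ i) t
        = -(cp - cv) * ρ0 i * D i t * θ i t + W i t)
    (E : ℝ → ℝ)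
    (hE : ∀ t, E t = ∑ i, ω i * ρ0 i * ((1 / 2) * ‖u i t‖ ^ 2 + cv * θ i t)) :
    (∀ t, deriv E t = 0) ∧ (∀ t₁ t₂, E t₁ = E t₂) := by

  have hEderiv : ∀ t, HasDerivAt E 0 t := by
    intro t
    have hterm : ∀ i : ι, HasDerivAt (fun s => ω i * ρ0 i * ((1 / 2) * ‖u i s‖ ^ 2 + cv * θ i s))
        (ω i * ρ0 i * ((inner ℝ (deriv (u i) t) (u i t) : ℝ) + cv * deriv (θ i) t)) t := by
      intro i
      have hu : HasDerivAt (u i) (deriv (u i) t) t := ((hudiff i) t).hasDerivAt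
      have hθ : HasDerivAt (θ i) (deriv (θ i) t) t := ((hθdiff i) t).hasDerivAt
      have hsq : HasDerivAt (fun s => (inner ℝ (u i s) (u i s) : ℝ))
          ((inner ℝ (u i t) (deriv (u i) t) : ℝ) + (inner ℝ (deriv (u i) t) (u i t) : ℝ)) t :=
        hu.inner ℝ hu
      have hsq' : HasDerivAt (fun s => ‖u i s‖ ^ 2)
          (2 * (inner ℝ (deriv (u i) t) (u i t) : ℝ)) t := by
        have : (fun s => ‖u i s‖ ^ 2) = fun s => (inner ℝ (u i s) (u i s) : ℝ) := by
          funext s; rw [real_inner_self_eq_norm_sq]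
        rw [this]
        convert hsq using 1
        rw [real_inner_comm (u i t)]; ring
      have := ((hsq'.const_mul ((1:ℝ)/2)).add (hθ.const_mul cv)).const_mul (ω i * ρ0 i)
      refine this.congr_deriv ?_
      ring
    have hsum := HasDerivAt.fun_sum (u := Finset.univ) (fun i _ => hterm i)
    have hEeq : E = fun s => ∑ i, ω i * ρ0 i * ((1 / 2) * ‖u i s‖ ^ 2 + cv * θ i s) :=
      funext hE
    rw [hEeq]
    refine hsum.congr_deriv (Eq.symm ?_)
    have h1 := hmom t
    have h2 : ∑ i, ω i * ρ0 i * (cv * deriv (θ i) t)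
        = -(cp - cv) * ∑ i, ω i * ρ0 i * θ i t * D i t + ∑ i, ω i * W i t := by
      rw [Finset.mul_sum, ← Finset.sum_add_distrib]
      refine Finset.sum_congr rfl fun i _ => ?_
      linear_combination ω i * hinternal i t
    calc (0:ℝ) = ∑ i, ω i * ρ0 i * (inner ℝ (deriv (u i) t) (u i t) : ℝ)
          + ∑ i, ω i * ρ0 i * (cv * deriv (θ i) t) := by rw [h1, h2]; ring
      _ = ∑ i, ω i * ρ0 i * ((inner ℝ (deriv (u i) t) (u i t) : ℝ) + cv * deriv (θ i) t) := by
          rw [← Finset.sum_add_distrib]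
          exact Finset.sum_congr rfl fun i _ => by ring
  constructor
  · intro t; exact (hEderiv t).deriv
  · intro t₁ t₂
    have : ∀ s, E s = E 0 := by
      intro s
      have hc : ∀ x ∈ Set.univ, HasDerivAt E ((0 : ℝ → ℝ) x) x := fun x _ => hEderiv x
      have := is_const_of_deriv_eq_zero (f := E)
        (fun x => (hEderiv x).differentiableAt) (fun x => (hEderiv x).deriv) s 0
      exact this
    rw [this t₁, this t₂]
end

section
/- Let d ≥ 1, let G be a real d×d matrix, and let a, b, J be nonnegative real numbers. Define the stress σ = a·J·sym(G) + b·J·(trace G)·I, where sym(G) = (G + Gᵀ)/2 and I is the d×d identity matrix. Then trace(σᵀ·G) = a·J·trace(sym(G)ᵀ·sym(G)) + b·J·(trace G)², and in particular trace(σᵀ·G) ≥ 0. -/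
open Matrix

lemma trace_symm_antisymm {d : ℕ} (S A : Matrix (Fin d) (Fin d) ℝ)
    (hS : S.transpose = S) (hA : A.transpose = -A) : (S * A).trace = 0 := by
  have h : (S * A).trace = ((S * A).transpose).trace := (Matrix.trace_transpose _).symm
  rw [Matrix.transpose_mul, hS, hA, Matrix.neg_mul, Matrix.trace_neg,
    Matrix.trace_mul_comm A S] at h
  linarith

/-- nonnegativity of the viscous dissipation `σ : ∇u`:
for `σ = a·J·sym(G) + b·J·(tr G)·I` with `a, b, J ≥ 0`,
`tr(σᵀG) = a·J·tr(sym(G)ᵀ sym(G)) + b·J·(tr G)² ≥ 0`. -/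
theorem viscous_dissipation_nonneg
    (d : ℕ) (hd : 1 ≤ d)
    (G : Matrix (Fin d) (Fin d) ℝ)
    (a b J : ℝ) (ha : 0 ≤ a) (hb : 0 ≤ b) (hJ : 0 ≤ J)
    (symG : Matrix (Fin d) (Fin d) ℝ)
    (hsym : symG = (1 / 2 : ℝ) • (G + G.transpose))
    (σ : Matrix (Fin d) (Fin d) ℝ)
    (hσ : σ = (a * J) • symG + (b * J * G.trace) • (1 : Matrix (Fin d) (Fin d) ℝ)) :
    (σ.transpose * G).trace
        = a * J * (symG.transpose * symG).trace + b * J * G.trace ^ 2 ∧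
      0 ≤ (σ.transpose * G).trace := by
  have hsymT : symG.transpose = symG := by
    rw [hsym]; simp [Matrix.transpose_smul, Matrix.transpose_add, add_comm]
  have hanti : (G - symG).transpose = -(G - symG) := by
    rw [hsym]
    ext i j
    simp [Matrix.transpose_apply, Matrix.sub_apply, Matrix.smul_apply, Matrix.add_apply]
    ring
  have hzero : (symG * (G - symG)).trace = 0 :=
    trace_symm_antisymm symG (G - symG) hsymT hanti
  have hkey : (symG.transpose * G).trace = (symG.transpose * symG).trace := by
    rw [hsymT]
    have : symG * G = symG * symG + symG * (G - symG) := by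
      rw [Matrix.mul_sub]; abel
    rw [this, Matrix.trace_add, hzero, add_zero]
  have heq : (σ.transpose * G).trace
      = a * J * (symG.transpose * symG).trace + b * J * G.trace ^ 2 := by
    rw [hσ]
    rw [Matrix.transpose_add, Matrix.transpose_smul, Matrix.transpose_smul,
      Matrix.transpose_one, Matrix.add_mul, Matrix.smul_mul, Matrix.smul_mul,
      Matrix.one_mul, Matrix.trace_add, Matrix.trace_smul, Matrix.trace_smul,
      smul_eq_mul, smul_eq_mul, hkey]
    ring
  refine ⟨heq, ?_⟩
  rw [heq]
  have h1 : 0 ≤ (symG.transpose * symG).trace := by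
    rw [Matrix.trace]
    refine Finset.sum_nonneg fun i _ => ?_
    rw [Matrix.diag_apply, Matrix.mul_apply]
    exact Finset.sum_nonneg fun j _ => by
      rw [Matrix.transpose_apply]; exact mul_self_nonneg _
  positivity
end

section
/- Let d ≥ 1, let G be a real d×d matrix, let a, b, J ≥ 0, and set σ = a·J·sym(G) + b·J·(trace G)·I with sym(G) = (G + Gᵀ)/2 and I the d×d identity. Let θ_old > 0, δt ≥ 0, c_v > 0, ρ0 > 0, and γ > 1 be reals, and suppose 1 + δt·(γ − 1)·trace(G) > 0. Then the backward-Euler temperature update θ_new = (θ_old + δt·trace(σᵀ·G)/(c_v·ρ0)) / (1 + δt·(γ − 1)·trace(G)) satisfies θ_new > 0. -/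
/-- positivity of the backward-Euler temperature update
`θ_new = (θ_old + δt·tr(σᵀG)/(c_v ρ0)) / (1 + δt·(γ−1)·tr G)`. -/
theorem backward_euler_temperature_positivity
    (d : ℕ) (hd : 1 ≤ d)
    (G : Matrix (Fin d) (Fin d) ℝ)
    (a b J : ℝ) (ha : 0 ≤ a) (hb : 0 ≤ b) (hJ : 0 ≤ J)
    (symG : Matrix (Fin d) (Fin d) ℝ)
    (hsym : symG = (1 / 2 : ℝ) • (G + G.transpose))
    (σ : Matrix (Fin d) (Fin d) ℝ)
    (hσ : σ = (a * J) • symG + (b * J * G.trace) • (1 : Matrix (Fin d) (Fin d) ℝ))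
    (θold δt cv ρ0 γ : ℝ)
    (hθold : 0 < θold) (hδt : 0 ≤ δt) (hcv : 0 < cv) (hρ0 : 0 < ρ0) (hγ : 1 < γ)
    (hden : 0 < 1 + δt * (γ - 1) * G.trace)
    (θnew : ℝ)
    (hθnew : θnew = (θold + δt * (σ.transpose * G).trace / (cv * ρ0))
        / (1 + δt * (γ - 1) * G.trace)) :
    0 < θnew := by
  have swap : ∀ f : Fin d → Fin d → ℝ, (∑ i, ∑ j, f i j) = ∑ i, ∑ j, f j i :=
    fun f => Finset.sum_comm
  -- symG is symmetric
  have hsymT : symG.transpose = symG := by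
    rw [hsym]; ext i j
    simp [Matrix.transpose_apply, Matrix.add_apply, Matrix.smul_apply]
    ring
  -- dissipation from the symmetric part is nonnegative
  have hS : 0 ≤ (symG * G).trace := by
    have htr : (symG * G).trace = ∑ i, ∑ j, symG i j * G j i := by
      simp [Matrix.trace, Matrix.mul_apply, Matrix.diag]
    have h2 : (symG * G).trace + (symG * G).trace
        = ∑ i, ∑ j, (G i j + G j i)^2 / 2 := by
      rw [htr]
      nth_rewrite 2 [swap (fun i j => symG i j * G j i)]
      rw [← Finset.sum_add_distrib]
      refine Finset.sum_congr rfl fun i _ => ?_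
      rw [← Finset.sum_add_distrib]
      refine Finset.sum_congr rfl fun j _ => ?_
      simp [hsym, Matrix.add_apply, Matrix.smul_apply, Matrix.transpose_apply]
      ring
    have hnn : 0 ≤ ∑ i, ∑ j, (G i j + G j i)^2 / 2 := by
      refine Finset.sum_nonneg fun i _ => Finset.sum_nonneg fun j _ => ?_
      positivity
    linarith
  -- dissipation trace is nonnegative
  have hkey : 0 ≤ (σ.transpose * G).trace := by
    have : σ.transpose * G = (a * J) • (symG * G) + (b * J * G.trace) • G := by
      rw [hσ, Matrix.transpose_add, Matrix.transpose_smul, Matrix.transpose_smul,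
        Matrix.transpose_one, hsymT, Matrix.add_mul, Matrix.smul_mul, Matrix.smul_mul,
        Matrix.one_mul]
    rw [this, Matrix.trace_add, Matrix.trace_smul, Matrix.trace_smul]
    have h1 : 0 ≤ (a * J) • (symG * G).trace := by
      simp only [smul_eq_mul]
      exact mul_nonneg (mul_nonneg ha hJ) hS
    have h2 : 0 ≤ (b * J * G.trace) • G.trace := by
      simp only [smul_eq_mul]
      nlinarith [sq_nonneg G.trace, mul_nonneg hb hJ]
    linarith
  rw [hθnew]
  have hnum : 0 < θold + δt * (σ.transpose * G).trace / (cv * ρ0) := by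
    have : 0 ≤ δt * (σ.transpose * G).trace / (cv * ρ0) := by positivity
    linarith
  exact div_pos hnum hden
end

section
/- Let ι be a finite index set and ω, ρ0 : ι → ℝ with ω_i > 0 and ρ0_i > 0 for all i. Let u^n, u^{n−1} : ι → ℝ^d and e^n, e^{n−1} : ι → ℝ satisfy the discrete energy balance Σ_{i∈ι} ω_i·ρ0_i·⟨u_i^n − u_i^{n−1}, u_i^n⟩ + Σ_{i∈ι} ω_i·ρ0_i·(e_i^n − e_i^{n−1}) = 0. Then the total discrete energies satisfy Σ_{i∈ι} ω_i·ρ0_i·(½‖u_i^n‖² + e_i^n) − Σ_{i∈ι} ω_i·ρ0_i·(½‖u_i^{n−1}‖² + e_i^{n−1}) = −½·Σ_{i∈ι} ω_i·ρ0_i·‖u_i^n − u_i^{n−1}‖² ≤ 0; in particular the total energy is nonincreasing from step n−1 to step n. -/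
/-- energy dissipation of the backward Euler step: from the
tested discrete energy balance, the total energy decreases by
`½ Σᵢ ωᵢ ρ0ᵢ ‖uᵢⁿ − uᵢⁿ⁻¹‖²`. -/
theorem backward_euler_energy_dissipation
    (ι : Type*) [Fintype ι] (d : ℕ)
    (ω ρ0 : ι → ℝ) (hω : ∀ i, 0 < ω i) (hρ0 : ∀ i, 0 < ρ0 i)
    (un um : ι → EuclideanSpace ℝ (Fin d)) (en em : ι → ℝ)
    (hbal : ∑ i, ω i * ρ0 i * (inner ℝ (un i - um i) (un i) : ℝ)
        + ∑ i, ω i * ρ0 i * (en i - em i) = 0) :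
    (∑ i, ω i * ρ0 i * ((1 / 2) * ‖un i‖ ^ 2 + en i))
        - (∑ i, ω i * ρ0 i * ((1 / 2) * ‖um i‖ ^ 2 + em i))
      = -(1 / 2) * ∑ i, ω i * ρ0 i * ‖un i - um i‖ ^ 2 ∧
    -(1 / 2) * (∑ i, ω i * ρ0 i * ‖un i - um i‖ ^ 2) ≤ 0 := by
  have key : ∀ i : ι,
      ω i * ρ0 i * ((1 / 2) * ‖un i‖ ^ 2 + en i)
        - ω i * ρ0 i * ((1 / 2) * ‖um i‖ ^ 2 + em i)
      = ω i * ρ0 i * (inner ℝ (un i - um i) (un i) : ℝ)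
        + ω i * ρ0 i * (en i - em i)
        - (1 / 2) * (ω i * ρ0 i * ‖un i - um i‖ ^ 2) := by
    intro i
    have h1 : (inner ℝ (un i - um i) (un i) : ℝ)
        = (1 / 2) * (‖un i‖ ^ 2 - ‖um i‖ ^ 2 + ‖un i - um i‖ ^ 2) := by
      have h2 := @norm_sub_sq_real (EuclideanSpace ℝ (Fin d)) _ _ (un i) (um i)
      have h3 : (inner ℝ (un i - um i) (un i) : ℝ)
          = ‖un i‖ ^ 2 - inner ℝ (um i) (un i) := by
        rw [inner_sub_left, real_inner_self_eq_norm_sq]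
      have h4 : (inner ℝ (un i) (um i) : ℝ) = inner ℝ (um i) (un i) :=
        real_inner_comm _ _
      rw [h3]; rw [h4] at h2; linarith
    rw [h1]; ring
  constructor
  · rw [← Finset.sum_sub_distrib]
    calc ∑ i, (ω i * ρ0 i * ((1 / 2) * ‖un i‖ ^ 2 + en i)
          - ω i * ρ0 i * ((1 / 2) * ‖um i‖ ^ 2 + em i))
        = ∑ i, (ω i * ρ0 i * (inner ℝ (un i - um i) (un i) : ℝ)
            + ω i * ρ0 i * (en i - em i)
            - (1 / 2) * (ω i * ρ0 i * ‖un i - um i‖ ^ 2)) := by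
          exact Finset.sum_congr rfl fun i _ => key i
      _ = -(1 / 2) * ∑ i, ω i * ρ0 i * ‖un i - um i‖ ^ 2 := by
          rw [Finset.sum_sub_distrib, Finset.sum_add_distrib, hbal,
            ← Finset.mul_sum]
          ring
  · have : 0 ≤ ∑ i, ω i * ρ0 i * ‖un i - um i‖ ^ 2 :=
      Finset.sum_nonneg fun i _ =>
        mul_nonneg (mul_nonneg (hω i).le (hρ0 i).le) (sq_nonneg _)
    nlinarith
end

section
/- Let ι be a finite index set and ω, ρ0 : ι → ℝ with ω_i > 0 and ρ0_i > 0 for all i. Let u^{n−1}, u^{n−1/2} : ι → ℝ^d and e^{n−1}, e^{n−1/2} : ι → ℝ satisfy the half-step balance Σ_{i∈ι} ω_i·ρ0_i·⟨u_i^{n−1/2} − u_i^{n−1}, u_i^{n−1/2}⟩ + Σ_{i∈ι} ω_i·ρ0_i·(e_i^{n−1/2} − e_i^{n−1}) = 0, and define the time-filtered values u_i^n = 2u_i^{n−1/2} − u_i^{n−1} and e_i^n = 2e_i^{n−1/2} − e_i^{n−1} for all i. Then the total discrete energy is exactly conserved: Σ_{i∈ι} ω_i·ρ0_i·(½‖u_i^n‖²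 + e_i^n) = Σ_{i∈ι} ω_i·ρ0_i·(½‖u_i^{n−1}‖² + e_i^{n−1}). -/
/-- exact energy conservation of the midpoint rule implemented
as backward Euler half step followed by the time filter (extrapolation). -/
theorem midpoint_rule_energy_conservation
    (ι : Type*) [Fintype ι] (d : ℕ)
    (ω ρ0 : ι → ℝ) (hω : ∀ i, 0 < ω i) (hρ0 : ∀ i, 0 < ρ0 i)
    (um uh : ι → EuclideanSpace ℝ (Fin d)) (em eh : ι → ℝ)
    (hbal : ∑ i, ω i * ρ0 i * (inner ℝ (uh i - um i) (uh i) : ℝ)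
        + ∑ i, ω i * ρ0 i * (eh i - em i) = 0)
    (un : ι → EuclideanSpace ℝ (Fin d)) (en : ι → ℝ)
    (hun : ∀ i, un i = (2 : ℝ) • uh i - um i)
    (hen : ∀ i, en i = 2 * eh i - em i) :
    ∑ i, ω i * ρ0 i * ((1 / 2) * ‖un i‖ ^ 2 + en i)
      = ∑ i, ω i * ρ0 i * ((1 / 2) * ‖um i‖ ^ 2 + em i) := by
  have key : ∀ i, ω i * ρ0 i * ((1 / 2) * ‖un i‖ ^ 2 + en i)
      - ω i * ρ0 i * ((1 / 2) * ‖um i‖ ^ 2 + em i)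
      = 2 * (ω i * ρ0 i * (inner ℝ (uh i - um i) (uh i) : ℝ))
        + 2 * (ω i * ρ0 i * (eh i - em i)) := by
    intro i
    have h1 : ‖un i‖ ^ 2 = ‖uh i‖ ^ 2 * 4 - 4 * (inner ℝ (uh i) (um i) : ℝ)
        + ‖um i‖ ^ 2 := by
      rw [hun i, norm_sub_sq_real, norm_smul, real_inner_smul_left, Real.norm_eq_abs, abs_two]
      ring
    have h2 : (inner ℝ (uh i - um i) (uh i) : ℝ)
        = (inner ℝ (uh i) (uh i) : ℝ) - (inner ℝ (uh i) (um i) : ℝ) := by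
      rw [inner_sub_left, real_inner_comm (um i) (uh i)]
    rw [h1, h2, hen i, ← real_inner_self_eq_norm_sq]
    ring
  have hs : ∑ i, (ω i * ρ0 i * ((1 / 2) * ‖un i‖ ^ 2 + en i)
      - ω i * ρ0 i * ((1 / 2) * ‖um i‖ ^ 2 + em i)) = 0 := by
    calc ∑ i, (ω i * ρ0 i * ((1 / 2) * ‖un i‖ ^ 2 + en i)
        - ω i * ρ0 i * ((1 / 2) * ‖um i‖ ^ 2 + em i))
        = ∑ i, (2 * (ω i * ρ0 i * (inner ℝ (uh i - um i) (uh i) : ℝ))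
          + 2 * (ω i * ρ0 i * (eh i - em i))) := by
          exact Finset.sum_congr rfl fun i _ => key i
      _ = 2 * (∑ i, ω i * ρ0 i * (inner ℝ (uh i - um i) (uh i) : ℝ)
          + ∑ i, ω i * ρ0 i * (eh i - em i)) := by
          rw [Finset.sum_add_distrib, ← Finset.mul_sum, ← Finset.mul_sum]; ring
      _ = 0 := by rw [hbal]; ring
  rw [Finset.sum_sub_distrib] at hs
  linarith
end

section
/- Let ψ : ℝ → ℝ be differentiable on (0, ∞), let ι be a finite index set, and ω, ρ0 : ι → ℝ with ω_i > 0 and ρ0_i > 0 for all i. For each i ∈ ι let J_i : ℝ → ℝ be differentiable with J_i(t) > 0 and J_i'(t) = J_i(t)·D_i(t) for all t, let u_i : ℝ → ℝ^d be differentiable, and define ρ_i(t) = ρ0_i/J_i(t) and p_i(t) = ψ'(ρ_i(t))·ρ_i(t) − ψ(ρ_i(t)). Suppose the momentum equation tested with the velocity holds: Σ_{i∈ι} ω_i·ρ0_i·⟨u_i'(t), u_i(t)⟩ = Σ_{i∈ι} ω_i·p_i(t)·J_i(t)·D_i(t) − Σ_{i∈ι} ω_i·W_i(t) for all t, with W_i(t)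 ≥ 0 for all i and t. Then the total discrete entropy functional E(t) = Σ_{i∈ι} ω_i·(½·ρ0_i·‖u_i(t)‖² + ψ(ρ_i(t))·J_i(t)) is differentiable with E'(t) = −Σ_{i∈ι} ω_i·W_i(t) ≤ 0 for all t; in particular E is nonincreasing. -/
/-- entropy stability of the isothermal variational Lagrangian
scheme: the total discrete entropy functional
`E(t) = Σᵢ ωᵢ (½ ρ0ᵢ ‖uᵢ‖² + ψ(ρᵢ)·Jᵢ)` satisfies `E' = −Σᵢ ωᵢ Wᵢ ≤ 0`,
hence `E` is nonincreasing. -/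
theorem isothermal_entropy_stability
    (ψ : ℝ → ℝ) (hψ : DifferentiableOn ℝ ψ (Set.Ioi 0))
    (ι : Type*) [Fintype ι] (d : ℕ)
    (ω ρ0 : ι → ℝ) (hω : ∀ i, 0 < ω i) (hρ0 : ∀ i, 0 < ρ0 i)
    (J D W : ι → ℝ → ℝ)
    (hJpos : ∀ i t, 0 < J i t)
    (hJ : ∀ i t, HasDerivAt (J i) (J i t * D i t) t)
    (u : ι → ℝ → EuclideanSpace ℝ (Fin d))
    (hudiff : ∀ i, Differentiable ℝ (u i))
    (ρ p : ι → ℝ → ℝ)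
    (hρ : ∀ i t, ρ i t = ρ0 i / J i t)
    (hp : ∀ i t, p i t = deriv ψ (ρ i t) * ρ i t - ψ (ρ i t))
    (hmom : ∀ t, ∑ i, ω i * ρ0 i * (inner ℝ (deriv (u i) t) (u i t) : ℝ)
        = ∑ i, ω i * p i t * J i t * D i t - ∑ i, ω i * W i t)
    (hW : ∀ i t, 0 ≤ W i t)
    (E : ℝ → ℝ)
    (hE : ∀ t, E t = ∑ i, ω i * ((1 / 2) * ρ0 i * ‖u i t‖ ^ 2 + ψ (ρ i t) * J i t)) :
    (∀ t, HasDerivAt E (-∑ i, ω i * W i t) t) ∧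
    (∀ t, -∑ i, ω i * W i t ≤ 0) ∧
    Antitone E := by
  have hρpos : ∀ i t, 0 < ρ i t := fun i t => by
    rw [hρ]; exact div_pos (hρ0 i) (hJpos i t)
  -- derivative of ρ i
  have hρd : ∀ i t, HasDerivAt (ρ i) (-(ρ i t * D i t)) t := by
    intro i t
    have h0 : HasDerivAt (fun s => ρ0 i / J i s)
        ((0 * J i t - ρ0 i * (J i t * D i t)) / (J i t) ^ 2) t :=
      (hasDerivAt_const t (ρ0 i)).div (hJ i t) (hJpos i t).ne'
    have heq : (fun s => ρ0 i / J i s) = ρ i := by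
      funext s; rw [hρ]
    rw [heq] at h0
    convert h0 using 1
    rw [hρ]
    have hJne : J i t ≠ 0 := (hJpos i t).ne'
    field_simp
    ring
  -- derivative of ψ ∘ ρ i
  have hψd : ∀ i t, HasDerivAt (fun s => ψ (ρ i s))
      (deriv ψ (ρ i t) * (-(ρ i t * D i t))) t := by
    intro i t
    have h1 : DifferentiableAt ℝ ψ (ρ i t) :=
      hψ.differentiableAt (Ioi_mem_nhds (hρpos i t))
    exact (h1.hasDerivAt.comp t (hρd i t))
  -- derivative of each term
  have hterm : ∀ i t, HasDerivAt
      (fun s => ω i * ((1 / 2) * ρ0 i * ‖u i s‖ ^ 2 + ψ (ρ i s) * J i s))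
      (ω i * (ρ0 i * (inner ℝ (deriv (u i) t) (u i t) : ℝ) - p i t * J i t * D i t)) t := by
    intro i t
    have hu : HasDerivAt (u i) (deriv (u i) t) t := (hudiff i t).hasDerivAt
    have hn : HasDerivAt (fun s => (inner ℝ (u i s) (u i s) : ℝ))
        ((inner ℝ (u i t) (deriv (u i) t) : ℝ) + (inner ℝ (deriv (u i) t) (u i t) : ℝ)) t :=
      hu.inner ℝ hu
    have hn2 : HasDerivAt (fun s => ‖u i s‖ ^ 2)
        (2 * (inner ℝ (deriv (u i) t) (u i t) : ℝ)) t := by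
      have heq : (fun s => ‖u i s‖ ^ 2) = fun s => (inner ℝ (u i s) (u i s) : ℝ) := by
        funext s; rw [real_inner_self_eq_norm_sq]
      rw [heq]
      convert hn using 1
      rw [real_inner_comm (u i t)]
      ring
    have hprod : HasDerivAt (fun s => ψ (ρ i s) * J i s)
        (deriv ψ (ρ i t) * (-(ρ i t * D i t)) * J i t + ψ (ρ i t) * (J i t * D i t)) t :=
      (hψd i t).mul (hJ i t)
    have := (((hn2.const_mul ((1 / 2) * ρ0 i)).add hprod).const_mul (ω i))
    refine this.congr_deriv ?_
    rw [hp, hρ]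
    have hJne : J i t ≠ 0 := (hJpos i t).ne'
    field_simp
    ring
  have hE' : ∀ t, HasDerivAt E (-∑ i, ω i * W i t) t := by
    intro t
    have hsum : HasDerivAt
        (fun s => ∑ i, ω i * ((1 / 2) * ρ0 i * ‖u i s‖ ^ 2 + ψ (ρ i s) * J i s))
        (∑ i, ω i * (ρ0 i * (inner ℝ (deriv (u i) t) (u i t) : ℝ) - p i t * J i t * D i t)) t :=
      HasDerivAt.fun_sum (fun i _ => hterm i t)
    have hEeq : E = fun s => ∑ i, ω i * ((1 / 2) * ρ0 i * ‖u i s‖ ^ 2 + ψ (ρ i s) * J i s) :=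
      funext hE
    rw [hEeq]
    convert hsum using 1
    have h1 : ∑ i, ω i * (ρ0 i * (inner ℝ (deriv (u i) t) (u i t) : ℝ) - p i t * J i t * D i t)
        = ∑ i, ω i * ρ0 i * (inner ℝ (deriv (u i) t) (u i t) : ℝ)
          - ∑ i, ω i * p i t * J i t * D i t := by
      rw [← Finset.sum_sub_distrib]
      exact Finset.sum_congr rfl (fun i _ => by ring)
    rw [h1, hmom t]
    ring
  have hnonpos : ∀ t, -∑ i, ω i * W i t ≤ 0 := by
    intro t
    have : 0 ≤ ∑ i, ω i * W i t :=
      Finset.sum_nonneg fun i _ => mul_nonneg (hω i).le (hW i t)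
    linarith
  exact ⟨hE', hnonpos, antitone_of_hasDerivAt_nonpos hE' hnonpos⟩
end
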